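/- Let 0 → I → M → F → 0 be a short exact sequence of G-lattices where I is invertible and F is flasque. Then the sequence splits. -/

import Mathlib

/-- The multiplicative group structure on `AddAut M` (multiplication is composition) that
Mathlib provided when this statement was written; Mathlib now makes `AddAut M` an additive group. -/
instance AddAut.groupByComposition {M : Type*} [Add M] : Group (AddAut M) where
  mul g h := AddEquiv.trans h g
  one := AddEquiv.refl _
  inv := AddEquiv.symm
  mul_assoc _ _ _ := rfl
  one_mul _ := rfl
  mul_one _ := rfl
  inv_mul_cancel := AddEquiv.self_trans_symm

@[simp]
theorem AddAut.one_apply_comp {M : Type*} [Add M] (m : M) : (1 : AddAut M) m = m := rfl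

@[simp]
theorem AddAut.mul_apply_comp {M : Type*} [Add M] (e₁ e₂ : AddAut M) (m : M) :
    (e₁ * e₂) m = e₁ (e₂ m) := rfl

/-- A 1-cohomology-vanishing ("coflasque") condition for an action `ρ` of `G` on `M`:
every 1-cocycle of every subgroup is a coboundary. -/
def IsCoflasque {G M : Type*} [Group G] [AddCommGroup M] (ρ : G →* AddAut M) : Prop :=
  ∀ (H : Subgroup G) (c : ↥H → M),
    (∀ g h : ↥H, c (g * h) = c g + ρ ↑g (c h)) → ∃ m : M, ∀ g : ↥H, c g = ρ ↑g m - m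

/-- "Flasque" condition (vanishing of `Ĥ⁻¹` for all subgroups): every element killed by
the norm of a subgroup lies in the augmentation submodule. -/
def IsFlasque {G M : Type*} [Group G] [Finite G] [AddCommGroup M] (ρ : G →* AddAut M) : Prop :=
  ∀ (H : Subgroup G) (x : M), (∑ᶠ h : ↥H, ρ ↑h x = 0) →
    x ∈ AddSubgroup.closure {y | ∃ (h : ↥H) (m : M), y = ρ ↑h m - m}

/-- The permutation action of `G` on `ι → ℤ` induced by an action on `ι`. -/
def permAut {G ι : Type*} [Group G] (act : G →* Equiv.Perm ι) : G →* AddAut (ι → ℤ) where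
  toFun g :=
    { toEquiv := Equiv.arrowCongr (act g) (Equiv.refl ℤ)
      map_add' := fun _ _ => rfl }
  map_one' := by ext f i; simp; rfl
  map_mul' := by
    intro g h; ext f i
    simp [← Equiv.Perm.inv_def, mul_inv_rev, Equiv.Perm.mul_apply]
    rfl

/-- `ρ` is a permutation representation: `M` is equivariantly isomorphic to a
finitely generated permutation `G`-lattice. -/
def IsPermutationRep {G M : Type*} [Group G] [AddCommGroup M] (ρ : G →* AddAut M) : Prop :=
  ∃ (ι : Type) (_ : Fintype ι) (act : G →* Equiv.Perm ι) (e : M ≃+ (ι → ℤ)),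
    ∀ (g : G) (m : M), e (ρ g m) = permAut act g (e m)

/-- `ρ` is invertible (permutation projective): `M` is an equivariant direct summand of a
finitely generated permutation `G`-lattice. -/
def IsInvertibleRep {G M : Type*} [Group G] [AddCommGroup M] (ρ : G →* AddAut M) : Prop :=
  ∃ (ι : Type) (_ : Fintype ι) (act : G →* Equiv.Perm ι)
    (f : M →+ (ι → ℤ)) (g : (ι → ℤ) →+ M),
      (∀ (γ : G) (m : M), f (ρ γ m) = permAut act γ (f m)) ∧
      (∀ (γ : G) (x : ι → ℤ), g (permAut act γ x) = ρ γ (g x)) ∧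
      (∀ m : M, g (f m) = m)

/-- The diagonal action on a product. -/
def prodAut {G M N : Type*} [Group G] [AddCommGroup M] [AddCommGroup N]
    (ρ : G →* AddAut M) (σ : G →* AddAut N) : G →* AddAut (M × N) where
  toFun g := AddEquiv.prodCongr (ρ g) (σ g)
  map_one' := by
    ext x <;> simp [AddEquiv.prodCongr, AddAut.one_apply_comp]
  map_mul' := by
    intro g h
    ext x <;> simp [AddEquiv.prodCongr, AddAut.mul_apply_comp]



private lemma aut_mul_apply {G X : Type*} [Group G] [AddCommGroup X] (ρ : G →* AddAut X)
    (a b : G) (x : X) : ρ (a * b) x = ρ a (ρ b x) := by rw [map_mul]; rfl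

private lemma aut_inv_cancel {G X : Type*} [Group G] [AddCommGroup X] (ρ : G →* AddAut X)
    (a : G) (x : X) : ρ a (ρ a⁻¹ x) = x := by
  rw [← aut_mul_apply, mul_inv_cancel, map_one]; rfl

private lemma aut_inv_cancel' {G X : Type*} [Group G] [AddCommGroup X] (ρ : G →* AddAut X)
    (a : G) (x : X) : ρ a⁻¹ (ρ a x) = x := by
  rw [← aut_mul_apply, inv_mul_cancel, map_one]; rfl

private lemma perm_inv_apply {ι : Type*} (e : Equiv.Perm ι) (a b : ι) (h : e a = b) :
    e⁻¹ b = a := by rw [← h, Equiv.Perm.inv_def, Equiv.symm_apply_apply]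


private lemma flasque_dual_vanish {G F : Type*} [Group G] [Fintype G] [AddCommGroup F]
    [Module.Free ℤ F] [Module.Finite ℤ F]
    (ρ : G →* AddAut F) (hF : IsFlasque ρ) (H : Subgroup G)
    (c : ↥H → (F →+ ℤ))
    (hc : ∀ (g h : ↥H) (x : F), c (g * h) x = c g x + c h (ρ (↑g)⁻¹ x)) :
    ∃ ψ : F →+ ℤ, ∀ (g : ↥H) (x : F), c g x = ψ x - ψ (ρ (↑g)⁻¹ x) := by
  classical
  haveI : Fintype ↥H := Fintype.ofFinite _
  set n : ℤ := (Fintype.card ↥H : ℤ) with hn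
  have hnpos : 0 < n := by rw [hn]; exact_mod_cast (Fintype.card_pos : 0 < Fintype.card ↥H)
  have hn0 : n ≠ 0 := ne_of_gt hnpos
  set S : F →+ ℤ := AddMonoidHom.mk' (fun x => ∑ h : ↥H, c h x)
    (by intro a b; simp [map_add, Finset.sum_add_distrib]) with hSdef
  have hS0 : ∀ x, S x = ∑ h : ↥H, c h x := fun _ => rfl
  have hS : ∀ (g : ↥H) (x : F), n * c g x = S x - S (ρ (↑g)⁻¹ x) := by
    intro g x
    have h1 : ∑ h : ↥H, c (g * h) x = S x :=
      Fintype.sum_equiv (Equiv.mulLeft g) _ _ (fun h => rfl)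
    have h2 : ∑ h : ↥H, c (g * h) x = n * c g x + S (ρ (↑g)⁻¹ x) := by
      simp only [hc]
      rw [Finset.sum_add_distrib, Finset.sum_const, Finset.card_univ, nsmul_eq_mul, hS0]
    rw [h1] at h2
    linarith
  set Agen : Set F := {y | ∃ (h : ↥H) (m : F), y = ρ ↑h m - m} with hAgen
  set A : AddSubgroup F := AddSubgroup.closure Agen with hA
  have hgen : ∀ (h : ↥H) (m : F), ρ ↑h m - m ∈ A :=
    fun h m => AddSubgroup.subset_closure ⟨h, m, rfl⟩
  have hdvd : ∀ y ∈ A, n ∣ S y := by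
    have hle : A ≤ AddSubgroup.comap S (AddSubgroup.zmultiples n) := by
      rw [hA]
      refine (AddSubgroup.closure_le _).mpr ?_
      rintro y ⟨h, m, rfl⟩
      simp only [SetLike.mem_coe, AddSubgroup.mem_comap, Int.mem_zmultiples_iff]
      have h1 := hS h⁻¹ m
      have hco : ((↑(h⁻¹) : G))⁻¹ = (↑h : G) := by simp
      rw [hco] at h1
      rw [map_sub]
      exact ⟨-(c h⁻¹ m), by linarith⟩
    intro y hy
    have := hle hy
    simpa only [AddSubgroup.mem_comap, Int.mem_zmultiples_iff] using this
  set Nh : F →+ F := AddMonoidHom.mk' (fun x => ∑ h : ↥H, ρ ↑h x)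
    (by intro a b; simp [map_add, Finset.sum_add_distrib]) with hNdef
  have hN0 : ∀ x, Nh x = ∑ h : ↥H, ρ ↑h x := fun _ => rfl
  have hNA : ∀ y ∈ A, Nh y = 0 := by
    have hle : A ≤ Nh.ker := by
      rw [hA]
      refine (AddSubgroup.closure_le _).mpr ?_
      rintro y ⟨g, m, rfl⟩
      simp only [SetLike.mem_coe, AddMonoidHom.mem_ker]
      rw [map_sub, hN0, hN0]
      have h1 : ∑ h : ↥H, ρ ↑h (ρ ↑g m) = ∑ h : ↥H, ρ ↑h m := by
        refine Fintype.sum_equiv (Equiv.mulRight g) _ _ (fun h => ?_)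
        rw [← aut_mul_apply]
        rfl
      rw [h1, sub_self]
    exact fun y hy => AddMonoidHom.mem_ker.mp (hle hy)
  set A' : Submodule ℤ F := AddSubgroup.toIntSubmodule A with hA'
  have hmemA' : ∀ x : F, x ∈ A' ↔ x ∈ A := fun x => Iff.rfl
  haveI : NoZeroSMulDivisors ℤ (F ⧸ A') := by
    refine ⟨fun {k} {q} hkq => ?_⟩
    by_cases hk : k = 0
    · exact Or.inl hk
    right
    obtain ⟨x, rfl⟩ := Submodule.Quotient.mk_surjective A' q
    have hx : k • x ∈ A' := by
      rwa [← Submodule.Quotient.mk_smul, Submodule.Quotient.mk_eq_zero] at hkq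
    have h1 : Nh (k • x) = 0 := hNA _ ((hmemA' _).mp hx)
    rw [map_zsmul] at h1
    have h2 : Nh x = 0 := by
      rcases smul_eq_zero.mp h1 with h | h
      · exact absurd h hk
      · exact h
    have h3 : x ∈ A := hF H x (by rw [finsum_eq_sum_of_fintype, ← hN0]; exact h2)
    rw [Submodule.Quotient.mk_eq_zero]
    exact (hmemA' _).mpr h3
  haveI : Module.Free ℤ (F ⧸ A') := Module.free_of_finite_type_torsion_free'
  obtain ⟨sq, hsq⟩ := Module.projective_lifting_property A'.mkQ LinearMap.id
    (Submodule.mkQ_surjective A')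
  have hsq' : ∀ q, A'.mkQ (sq q) = q :=
    fun q => congrArg (fun (f : (F ⧸ A') →ₗ[ℤ] (F ⧸ A')) => f q) hsq
  set t : F → F := fun x => x - sq (A'.mkQ x) with ht
  have htA : ∀ x, t x ∈ A := by
    intro x
    have h1 : A'.mkQ (t x) = 0 := by
      show A'.mkQ (x - sq (A'.mkQ x)) = 0
      rw [map_sub, hsq', sub_self]
    rw [Submodule.mkQ_apply, Submodule.Quotient.mk_eq_zero] at h1
    exact (hmemA' _).mp h1
  have htid : ∀ y ∈ A, t y = y := by
    intro y hy
    have h1 : A'.mkQ y = 0 := by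
      rw [Submodule.mkQ_apply, Submodule.Quotient.mk_eq_zero]
      exact (hmemA' _).mpr hy
    show y - sq (A'.mkQ y) = y
    rw [h1, map_zero, sub_zero]
  have htadd : ∀ a b, t (a + b) = t a + t b := by
    intro a b
    show (a + b) - sq (A'.mkQ (a + b)) = (a - sq (A'.mkQ a)) + (b - sq (A'.mkQ b))
    rw [map_add, map_add]
    abel
  have hdvdt : ∀ x, n ∣ S (t x) := fun x => hdvd _ (htA x)
  set ψ : F →+ ℤ := AddMonoidHom.mk' (fun x => S (t x) / n) (by
    intro a b
    obtain ⟨u, hu⟩ := hdvdt a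
    obtain ⟨v, hv⟩ := hdvdt b
    have hab : S (t (a + b)) = n * (u + v) := by rw [htadd, map_add, hu, hv]; ring
    show S (t (a + b)) / n = S (t a) / n + S (t b) / n
    rw [hab, hu, hv, Int.mul_ediv_cancel_left _ hn0, Int.mul_ediv_cancel_left _ hn0,
      Int.mul_ediv_cancel_left _ hn0]) with hψdef
  have hψ0 : ∀ x, n * ψ x = S (t x) := by
    intro x
    show n * (S (t x) / n) = S (t x)
    exact Int.mul_ediv_cancel' (hdvdt x)
  have hψA : ∀ y ∈ A, n * ψ y = S y := by
    intro y hy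
    rw [hψ0, htid y hy]
  refine ⟨ψ, fun g x => ?_⟩
  have h1 : n * c g x = S x - S (ρ (↑g)⁻¹ x) := hS g x
  have hyA : ρ (↑g)⁻¹ x - x ∈ A := by
    have h2 := hgen g⁻¹ x
    have hco : ((↑(g⁻¹) : G)) = (↑g : G)⁻¹ := rfl
    rwa [hco] at h2
  have h2 : n * ψ (ρ (↑g)⁻¹ x - x) = S (ρ (↑g)⁻¹ x - x) := hψA _ hyA
  rw [map_sub, map_sub, mul_sub] at h2
  have h3 : n * (ψ x - ψ (ρ (↑g)⁻¹ x)) = n * c g x := by rw [mul_sub]; linarith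
  exact (mul_left_cancel₀ hn0 h3).symm

/-- A short exact sequence of `G`-lattices `0 → I → M → F → 0` with `I` invertible and
`F` flasque splits. -/
theorem invertible_flasque_splits {G I M F : Type*} [Group G] [Fintype G]
    [AddCommGroup I] [AddCommGroup M] [AddCommGroup F]
    [Module.Free ℤ I] [Module.Finite ℤ I]
    [Module.Free ℤ M] [Module.Finite ℤ M]
    [Module.Free ℤ F] [Module.Finite ℤ F]
    (ρI : G →* AddAut I) (ρM : G →* AddAut M) (ρF : G →* AddAut F)
    (j : I →+ M) (p : M →+ F)
    (hj : ∀ (g : G) (x : I), j (ρI g x) = ρM g (j x))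
    (hp : ∀ (g : G) (x : M), p (ρM g x) = ρF g (p x))
    (hinj : Function.Injective j) (hsurj : Function.Surjective p)
    (hexact : ∀ m : M, p m = 0 ↔ m ∈ Set.range j)
    (hI : IsInvertibleRep ρI) (hF : IsFlasque ρF) :
    ∃ r : M →+ I, (∀ (g : G) (x : M), r (ρM g x) = ρI g (r x)) ∧ ∀ x : I, r (j x) = x := by
  classical
  obtain ⟨ι, _inst, act, f, g', hf, hg', hgf⟩ := hI
  -- Step 1: a ℤ-linear splitting `s` of `p`
  obtain ⟨s', hs'⟩ := Module.projective_lifting_property p.toIntLinearMap LinearMap.id hsurj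
  set s : F →+ M := s'.toAddMonoidHom with hsdef
  have hs : ∀ x, p (s x) = x :=
    fun x => congrArg (fun (f : F →ₗ[ℤ] F) => f x) hs'
  -- Step 2: a ℤ-linear retraction r₀ of j
  have hps : ∀ m, ∃ x : I, j x = m - s (p m) := by
    intro m
    have h1 : p (m - s (p m)) = 0 := by rw [map_sub, hs, sub_self]
    obtain ⟨x, hx⟩ := (hexact _).mp h1
    exact ⟨x, hx⟩
  choose r₀f hr₀f using hps
  have hr₀add : ∀ a b, r₀f (a + b) = r₀f a + r₀f b := by
    intro a b
    apply hinj
    rw [map_add, hr₀f, hr₀f, hr₀f, map_add, map_add]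
    abel
  set r₀ : M →+ I := AddMonoidHom.mk' r₀f hr₀add with hr₀def
  have hjr : ∀ m, j (r₀ m) = m - s (p m) := hr₀f
  have hr₀j : ∀ x : I, r₀ (j x) = x := by
    intro x
    apply hinj
    have hpj : p (j x) = 0 := (hexact _).mpr ⟨x, rfl⟩
    rw [hjr, hpj, map_zero, sub_zero]
  -- Step 3: obstruction cocycle with values in Hom(M, I)
  set cH : G → M →+ I := fun γ => AddMonoidHom.mk' (fun m => ρI γ (r₀ (ρM γ⁻¹ m)) - r₀ m)
    (by intro a b; simp only [map_add]; abel) with hcHdef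
  have hcH : ∀ γ m, cH γ m = ρI γ (r₀ (ρM γ⁻¹ m)) - r₀ m := fun _ _ => rfl
  have hck : ∀ (γ : G) (x : I), cH γ (j x) = 0 := by
    intro γ x
    have h1 : ρM γ⁻¹ (j x) = j (ρI γ⁻¹ x) := (hj γ⁻¹ x).symm
    rw [hcH, h1, hr₀j, hr₀j, aut_inv_cancel, sub_self]
  have hcker : ∀ (γ : G) (m : M), p m = 0 → cH γ m = 0 := by
    intro γ m hm
    obtain ⟨x, rfl⟩ := (hexact m).mp hm
    exact hck γ x
  have hcp : ∀ (γ : G) (m : M), cH γ m = cH γ (s (p m)) := by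
    intro γ m
    have h1 : cH γ (m - s (p m)) = 0 := hcker γ _ (by rw [map_sub, hs, sub_self])
    rw [map_sub] at h1
    exact sub_eq_zero.mp h1
  have hcoc : ∀ (γ δ : G) (m : M), cH (γ * δ) m = cH γ m + ρI γ (cH δ (ρM γ⁻¹ m)) := by
    intro γ δ m
    simp only [hcH]
    have h1 : ρM (γ * δ)⁻¹ m = ρM δ⁻¹ (ρM γ⁻¹ m) := by rw [mul_inv_rev, aut_mul_apply]
    rw [h1, aut_mul_apply ρI γ δ, map_sub (ρI γ)]
    abel
  -- Step 4: push the cocycle into the permutation module, componentwise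
  set D : G → ι → (F →+ ℤ) := fun γ i => AddMonoidHom.mk'
      (fun x => f (cH γ (s x)) i)
      (by intro a b; simp only [map_add, Pi.add_apply]) with hDdef
  have hD0 : ∀ γ i x, D γ i x = f (cH γ (s x)) i := fun _ _ _ => rfl
  have hperm : ∀ (γ : G) (y : ι → ℤ) (i : ι), permAut act γ y i = y ((act γ)⁻¹ i) :=
    fun _ _ _ => rfl
  have hDcoc : ∀ (γ δ : G) (i : ι) (x : F),
      D (γ * δ) i x = D γ i x + D δ ((act γ)⁻¹ i) (ρF γ⁻¹ x) := by
    intro γ δ i x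
    rw [hD0, hD0, hD0, hcoc, map_add, Pi.add_apply]
    congr 1
    rw [hf, hperm]
    have h1 : cH δ (ρM γ⁻¹ (s x)) = cH δ (s (ρF γ⁻¹ x)) := by
      rw [hcp δ (ρM γ⁻¹ (s x)), hp, hs]
    rw [h1]
  -- Step 5: stabilizer subgroups and the key vanishing lemma
  set Hst : ι → Subgroup G := fun i₀ =>
    { carrier := {γ : G | act γ i₀ = i₀}
      one_mem' := by simp
      mul_mem' := by
        intro a b ha hb
        simp only [Set.mem_setOf_eq, map_mul, Equiv.Perm.mul_apply] at *
        rw [hb, ha]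
      inv_mem' := by
        intro a ha
        simp only [Set.mem_setOf_eq, map_inv] at *
        exact perm_inv_apply _ _ _ ha } with hHst
  have hΨex : ∀ i₀ : ι, ∃ ψ : F →+ ℤ, ∀ (γ : G), act γ i₀ = i₀ →
      ∀ x, D γ i₀ x = ψ x - ψ (ρF γ⁻¹ x) := by
    intro i₀
    obtain ⟨ψ, hψ⟩ := flasque_dual_vanish ρF hF (Hst i₀)
      (fun h => D (↑h) i₀)
      (by
        intro g h x
        have hg : act (↑g) i₀ = i₀ := g.2
        have h1 : D (↑g * ↑h) i₀ x = D ↑g i₀ x + D ↑h ((act ↑g)⁻¹ i₀) (ρF (↑g)⁻¹ x) :=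
          hDcoc _ _ _ _
        rwa [perm_inv_apply _ _ _ hg] at h1)
    exact ⟨ψ, fun γ hγ x => hψ ⟨γ, hγ⟩ x⟩
  choose Ψ hΨ using hΨex
  -- Step 6: orbit representatives
  set osetoid : Setoid ι := ⟨fun i j => ∃ γ : G, act γ i = j,
    ⟨fun i => ⟨1, by simp⟩,
     fun {i j} h => by
       obtain ⟨γ, hγ⟩ := h
       exact ⟨γ⁻¹, by rw [← hγ, map_inv, Equiv.Perm.inv_def, Equiv.symm_apply_apply]⟩,
     fun {i j k} h1 h2 => by
       obtain ⟨γ, hγ⟩ := h1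
       obtain ⟨δ, hδ⟩ := h2
       exact ⟨δ * γ, by rw [map_mul, Equiv.Perm.mul_apply, hγ, hδ]⟩⟩⟩ with hose
  set rep : ι → ι := fun i => (Quotient.mk osetoid i).out with hrep
  have hrep_orbit : ∀ i, ∃ γ : G, act γ (rep i) = i := by
    intro i
    exact Quotient.exact ((Quotient.out_eq (Quotient.mk osetoid i)))
  have hrep_const : ∀ (γ : G) (i : ι), rep (act γ i) = rep i := by
    intro γ i
    have h1 : Quotient.mk osetoid (act γ i) = Quotient.mk osetoid i :=
      Quotient.sound ⟨γ⁻¹, by rw [map_inv, Equiv.Perm.inv_def, Equiv.symm_apply_apply]⟩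
    show (Quotient.mk osetoid (act γ i)).out = (Quotient.mk osetoid i).out
    rw [h1]
  choose σ hσ using hrep_orbit
  -- Step 7: the global coboundary φ
  set φ : ι → F →+ ℤ := fun i => AddMonoidHom.mk'
    (fun x => D (σ i) i x + Ψ (rep i) (ρF (σ i)⁻¹ x))
    (by intro a b; simp only [map_add]; abel) with hφdef
  have hφ0 : ∀ i x, φ i x = D (σ i) i x + Ψ (rep i) (ρF (σ i)⁻¹ x) := fun _ _ => rfl
  have hφcob : ∀ (γ : G) (i : ι) (x : F),
      D γ i x = φ i x - φ ((act γ)⁻¹ i) (ρF γ⁻¹ x) := by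
    intro γ i x
    set jd : ι := (act γ)⁻¹ i with hjd
    have e2 : act γ jd = i := Equiv.apply_symm_apply _ _
    have hrepj : rep jd = rep i := by rw [← e2, hrep_const]
    have e1 : act (σ jd) (rep i) = jd := by rw [← hrepj]; exact hσ jd
    set h : G := (σ i)⁻¹ * (γ * σ jd) with hh
    have hmem : act h (rep i) = rep i := by
      rw [hh, map_mul, map_mul, map_inv, Equiv.Perm.mul_apply, Equiv.Perm.mul_apply, e1, e2]
      exact perm_inv_apply _ _ _ (hσ i)
    have heq : σ i * h = γ * σ jd := by rw [hh]; group
    have E1 : D (σ i * h) i x = D (σ i) i x + D h ((act (σ i))⁻¹ i) (ρF (σ i)⁻¹ x) :=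
      hDcoc _ _ _ _
    have E2 : D (γ * σ jd) i x = D γ i x + D (σ jd) ((act γ)⁻¹ i) (ρF γ⁻¹ x) :=
      hDcoc _ _ _ _
    rw [perm_inv_apply _ _ _ (hσ i)] at E1
    have hDh : D h (rep i) (ρF (σ i)⁻¹ x)
        = Ψ (rep i) (ρF (σ i)⁻¹ x) - Ψ (rep i) (ρF h⁻¹ (ρF (σ i)⁻¹ x)) :=
      hΨ (rep i) h hmem _
    have hcompose : ρF h⁻¹ (ρF (σ i)⁻¹ x) = ρF (σ jd)⁻¹ (ρF γ⁻¹ x) := by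
      rw [← aut_mul_apply, ← aut_mul_apply, ← mul_inv_rev, ← mul_inv_rev, heq]
    rw [heq] at E1
    rw [← hjd] at E2
    have key := E1.symm.trans E2
    rw [hDh, hcompose] at key
    rw [hφ0, hφ0, hrepj]
    linarith
  -- Step 8: pull back along the splitting of the permutation module
  set eF : F →+ I := g'.comp (AddMonoidHom.mk' (fun x => fun i => φ i x)
    (by intro a b; funext i; simp [map_add])) with heFdef
  have heF0 : ∀ x, eF x = g' (fun i => φ i x) := fun _ => rfl
  have hde : ∀ (γ : G) (x : F), cH γ (s x) = eF x - ρI γ (eF (ρF γ⁻¹ x)) := by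
    intro γ x
    have h1 : f (cH γ (s x)) = fun i => D γ i x := funext fun i => (hD0 γ i x).symm
    have h2 : (fun i => D γ i x)
        = (fun i => φ i x) - permAut act γ (fun i => φ i (ρF γ⁻¹ x)) := by
      funext i
      rw [Pi.sub_apply, hφcob γ i x, hperm]
    calc cH γ (s x) = g' (f (cH γ (s x))) := (hgf _).symm
      _ = g' ((fun i => φ i x) - permAut act γ (fun i => φ i (ρF γ⁻¹ x))) := by rw [h1, h2]
      _ = eF x - ρI γ (eF (ρF γ⁻¹ x)) := by rw [map_sub, hg', heF0, heF0]
  -- Step 9: conclusion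
  refine ⟨r₀ + eF.comp p, ?_, ?_⟩
  · intro γ m
    have key := hde γ (ρF γ (p m))
    rw [aut_inv_cancel' ρF γ (p m)] at key
    have hc1 : cH γ (s (ρF γ (p m))) = cH γ (ρM γ m) := by
      rw [hcp γ (ρM γ m), hp]
    have hc2 : cH γ (ρM γ m) = ρI γ (r₀ m) - r₀ (ρM γ m) := by
      rw [hcH, aut_inv_cancel' ρM γ m]
    have h3 : ρI γ (r₀ m) - r₀ (ρM γ m) = eF (ρF γ (p m)) - ρI γ (eF (p m)) := by
      rw [← hc2, ← hc1]; exact key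
    have h4 := sub_eq_sub_iff_add_eq_add.mp h3
    show r₀ (ρM γ m) + eF (p (ρM γ m)) = ρI γ (r₀ m + eF (p m))
    rw [map_add (ρI γ), hp, h4]
    exact add_comm _ _
  · intro x
    show r₀ (j x) + eF (p (j x)) = x
    rw [hr₀j, (hexact _).mpr ⟨x, rfl⟩, map_zero, add_zero]
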